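/- Let P₁ be a finite lattice, P₂ the lattice of nonempty down-sets of P₁ ordered by inclusion, and D : P₂ → Set S a map satisfying D(ā ∪ b̄) = D(ā) ∪ D(b̄), D(ā ∩ b̄) = D(ā) ∩ D(b̄), and ā ⊆ b̄ ⇔ D(ā) ⊆ D(b̄). For a nonempty up-set F of P₂ with complement F' = P₂ \ F, define the class C(F) = (⋂_{b̄∈F'} D(b̄)ᶜ) ∩ (⋂_{ā∈F} D(ā)). Then C(F) ≠ ∅ if and only if ⋂F ⊄ (not a subset of) ⋃F', i.e. inf F ≰ sup F' in P₂ (when F' is empty interpret sup F' so that the condition holds automatically given D reflects order and classes use full space conventions). -/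

import Mathlib

/-- The nonempty down-sets of a lattice `P`, i.e. the Level-II labels `P₂`. -/
def NeDownSet (P : Type*) [Preorder P] : Type _ :=
  {s : Set P // IsLowerSet s ∧ s.Nonempty}

instance (P : Type*) [Preorder P] : PartialOrder (NeDownSet P) :=
  Subtype.partialOrder _

/-- Existence criterion (Proposition 1): for a nonempty up-set `F` of the
lattice `P₂` of nonempty down-sets of a finite lattice `P₁`, and
`D : P₂ → Set S` order-reflecting, commuting with binary unions/intersections,
with nonempty values, the class
`C(F) = (⋂ b ∈ Fᶜ, (D b)ᶜ) ∩ (⋂ a ∈ F, D a)` is nonempty iff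
`inf F ≰ sup Fᶜ`, i.e. `¬ (⋂ a ∈ F, a) ⊆ (⋃ b ∈ Fᶜ, b)`. -/
theorem class_nonempty_iff_inf_not_le_sup
    {P₁ S : Type*} [Lattice P₁] [OrderBot P₁] [Fintype P₁]
    (D : NeDownSet P₁ → Set S)
    (hord : ∀ a b : NeDownSet P₁, a.1 ⊆ b.1 ↔ D a ⊆ D b)
    (hun : ∀ a b c : NeDownSet P₁, c.1 = a.1 ∪ b.1 → D c = D a ∪ D b)
    (hint : ∀ a b c : NeDownSet P₁, c.1 = a.1 ∩ b.1 → D c = D a ∩ D b)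
    (hDne : ∀ a : NeDownSet P₁, (D a).Nonempty)
    (F : Set (NeDownSet P₁)) (hF : IsUpperSet F) (hFne : F.Nonempty) :
    ((⋂ b ∈ Fᶜ, (D b)ᶜ) ∩ ⋂ a ∈ F, D a).Nonempty ↔
      ¬ (⋂ a ∈ F, a.1) ⊆ ⋃ b ∈ Fᶜ, b.1 := by
  classical
  have botmem : ∀ a : NeDownSet P₁, (⊥ : P₁) ∈ a.1 := by
    rintro ⟨s, hs, x, hx⟩
    exact hs bot_le hx
  -- D commutes with finite nonempty intersections
  have key_inter : ∀ (G : Finset (NeDownSet P₁)) (hG : G.Nonempty)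
      (c : NeDownSet P₁), c.1 = ⋂ a ∈ G, a.1 → D c = ⋂ a ∈ G, D a := by
    intro G hG
    induction hG using Finset.Nonempty.cons_induction with
    | singleton a =>
      intro c hc
      simp only [Finset.mem_singleton, Set.iInter_iInter_eq_left] at hc ⊢
      have : c = a := Subtype.ext hc
      rw [this]
    | cons a s ha hs ih =>
      intro c hc
      set c' : NeDownSet P₁ :=
        ⟨⋂ x ∈ s, x.1, isLowerSet_iInter₂ fun x _ => x.2.1,
          ⟨⊥, Set.mem_iInter₂.2 fun x _ => botmem x⟩⟩ with hc'
      have h1 : c.1 = a.1 ∩ c'.1 := by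
        rw [hc]
        simp [Finset.set_biInter_insert, hc']
      rw [hint a c' c h1, ih c' rfl]
      simp [Finset.set_biInter_insert]
  have key_union : ∀ (G : Finset (NeDownSet P₁)) (hG : G.Nonempty)
      (c : NeDownSet P₁), c.1 = ⋃ a ∈ G, a.1 → D c = ⋃ a ∈ G, D a := by
    intro G hG
    induction hG using Finset.Nonempty.cons_induction with
    | singleton a =>
      intro c hc
      simp only [Finset.mem_singleton, Set.iUnion_iUnion_eq_left] at hc ⊢
      have : c = a := Subtype.ext hc
      rw [this]
    | cons a s ha hs ih =>
      intro c hc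
      obtain ⟨x0, hx0⟩ := hs
      set c' : NeDownSet P₁ :=
        ⟨⋃ x ∈ s, x.1, isLowerSet_iUnion₂ fun x _ => x.2.1,
          ⟨⊥, Set.mem_iUnion₂.2 ⟨x0, hx0, botmem x0⟩⟩⟩ with hc'
      have h1 : c.1 = a.1 ∪ c'.1 := by
        rw [hc]
        simp [Finset.set_biUnion_insert, hc']
      rw [hun a c' c h1, ih c' rfl]
      simp [Finset.set_biUnion_insert]
  -- the infimum of F
  set m : NeDownSet P₁ :=
    ⟨⋂ a ∈ F, a.1, isLowerSet_iInter₂ fun x _ => x.2.1,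
      ⟨⊥, Set.mem_iInter₂.2 fun x _ => botmem x⟩⟩ with hm
  haveI : Finite (NeDownSet P₁) := by
    unfold NeDownSet; infer_instance
  have hFfin : F.Finite := Set.toFinite F
  have hFcofin : Fᶜ.Finite := Set.toFinite _
  have hFco : (⋂ a ∈ hFfin.toFinset, a.1) = ⋂ a ∈ F, a.1 := by
    ext x; simp
  have hFcoD : (⋂ a ∈ hFfin.toFinset, D a) = ⋂ a ∈ F, D a := by
    ext x; simp
  have hDm : D m = ⋂ a ∈ F, D a := by
    rw [← hFcoD]
    refine key_inter _ (by simpa using hFne) m ?_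
    rw [hFco]
  rcases Set.eq_empty_or_nonempty Fᶜ with hFc | hFc
  · -- F is everything
    simp only [hFc]
    simp only [Set.mem_empty_iff_false, Set.iInter_of_empty, Set.iInter_univ,
      Set.iUnion_of_empty, Set.iUnion_empty, Set.univ_inter]
    constructor
    · intro _ h
      exact (h (Set.mem_iInter₂.2 fun x _ => botmem x) : (⊥ : P₁) ∈ (∅ : Set P₁))
    · intro _
      rw [← hDm]; exact hDne m
  · -- F' nonempty: form its supremum u
    set u : NeDownSet P₁ :=
      ⟨⋃ b ∈ Fᶜ, b.1, isLowerSet_iUnion₂ fun x _ => x.2.1,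
        ⟨⊥, Set.mem_iUnion₂.2 ⟨hFc.choose, hFc.choose_spec, botmem hFc.choose⟩⟩⟩ with hu
    have hcou : (⋃ b ∈ hFcofin.toFinset, b.1) = ⋃ b ∈ Fᶜ, b.1 := by
      ext x; simp
    have hcouD : (⋃ b ∈ hFcofin.toFinset, D b) = ⋃ b ∈ Fᶜ, D b := by
      ext x; simp
    have hDu : D u = ⋃ b ∈ Fᶜ, D b := by
      rw [← hcouD]
      refine key_union _ (by simpa using hFc) u ?_
      rw [hcou]
    have hL : (⋂ b ∈ Fᶜ, (D b)ᶜ) = (D u)ᶜ := by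
      rw [hDu, Set.compl_iUnion₂]
    rw [hL, ← hDm]
    constructor
    · rintro ⟨s, hs1, hs2⟩ hsub
      exact hs1 ((hord m u).1 hsub hs2)
    · intro hsub
      have : ¬ D m ⊆ D u := fun h => hsub ((hord m u).2 h)
      obtain ⟨s, hs1, hs2⟩ := Set.not_subset.1 this
      exact ⟨s, hs2, hs1⟩
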